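/- Let d ≥ 2 and let α, β be ℤ₂-(d−1)-cochains on the d-dimensional hypercube. For 1 ≤ i ≤ d and ε ∈ {+,−}, write î_ε for the (d−1)-cell whose i-th entry is ε and whose other entries are all •. Then (α ∪_{d−2} β)(•,…,•) = Σ_{1 ≤ i < j ≤ d} [ α(î_{ε(i+1)}) β(ĵ_{ε(j+1)}) + β(î_{ε(i)}) α(ĵ_{ε(j)}) ], where ε(t) denotes + if t is even and − if t is odd. -/

import Mathlib

/-- The three possible entries of a cell label of the hypercube:
`dot` = `•` (a spanned direction), `pls` = `+`, `mns` = `−`. -/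
inductive Sgn : Type
  | dot : Sgn
  | pls : Sgn
  | mns : Sgn
  deriving DecidableEq

instance instFintypeSgn : Fintype Sgn :=
  ⟨{Sgn.dot, Sgn.pls, Sgn.mns}, fun x => by cases x <;> simp⟩

/-- A cell of the `d`-dimensional hypercube, labeled by a tuple in `{•,+,−}^d`. -/
abbrev Cell (d : ℕ) := Fin d → Sgn

/-- A `ℤ₂`-cochain on the `d`-dimensional hypercube. -/
abbrev Cochain (d : ℕ) := Cell d → ZMod 2

/-- The top cell `(•,…,•)`. -/
def topCell (d : ℕ) : Cell d := fun _ => Sgn.dot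

/-- The set of coordinates of a cell labeled `•`. -/
def dots {d : ℕ} (w : Cell d) : Finset (Fin d) :=
  Finset.univ.filter (fun j => w j = Sgn.dot)

/-- The coboundary of a `ℤ₂`-cochain: `(δα)(w)` is the sum of `α` over all cells obtained
from `w` by replacing exactly one entry equal to `•` by `+` or by `−`. -/
def delta {d : ℕ} (α : Cochain d) : Cochain d := fun w =>
  ∑ j ∈ dots w, (α (Function.update w j Sgn.pls) + α (Function.update w j Sgn.mns))

/-- The set of coordinates where both `z` and `z'` are `•`. -/
def bothDot {d : ℕ} (z z' : Cell d) : Finset (Fin d) :=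
  Finset.univ.filter (fun j => z j = Sgn.dot ∧ z' j = Sgn.dot)

/-- The allowed values of `(z_j, z'_j)` at a coordinate `j` not in the common-`•` set `I`:
`(+,•)` or `(•,−)` when `ℓ(j) = #{i ∈ I : i < j}` is even, and `(−,•)` or `(•,+)` when it
is odd. -/
def pairCond {d : ℕ} (I : Finset (Fin d)) (j : Fin d) (a b : Sgn) : Prop :=
  if (I.filter (fun i => i < j)).card % 2 = 0 then
    (a = Sgn.pls ∧ b = Sgn.dot) ∨ (a = Sgn.dot ∧ b = Sgn.mns)
  else
    (a = Sgn.mns ∧ b = Sgn.dot) ∨ (a = Sgn.dot ∧ b = Sgn.pls)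

/-- The pairs `(z,z')` appearing in the `m`-th higher cup product evaluated on the cell `w`:
the entries of `w` equal to `+` or `−` are fixed in both arguments, there are exactly `m`
coordinates where both `z` and `z'` are `•`, and at the remaining `•`-coordinates of `w`
the parity condition `pairCond` holds. -/
def IntPair {d : ℕ} (m : ℕ) (w z z' : Cell d) : Prop :=
  (∀ j, w j ≠ Sgn.dot → z j = w j ∧ z' j = w j) ∧
    (bothDot z z').card = m ∧
    ∀ j, w j = Sgn.dot → j ∉ bothDot z z' → pairCond (bothDot z z') j (z j) (z' j)

open Classical in
/-- The finite set of pairs in `Int_m` relative to the cell `w`. -/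
noncomputable def intPairs {d : ℕ} (m : ℕ) (w : Cell d) : Finset (Cell d × Cell d) :=
  Finset.univ.filter (fun p => IntPair m w p.1 p.2)

/-- The higher cup product `α ∪_m β` of `ℤ₂`-cochains:
`(α ∪_m β)(w) = Σ_{(z,z') ∈ Int_m(w)} α(z)·β(z')`. -/
noncomputable def cup {d : ℕ} (m : ℕ) (α β : Cochain d) : Cochain d := fun w =>
  ∑ p ∈ intPairs m w, α p.1 * β p.2

/-- The `(d−1)`-cell `î_s` whose `i`-th entry is `s` and whose other entries are all `•`. -/
def hatCell {d : ℕ} (i : Fin d) (s : Sgn) : Cell d := fun j => if j = i then s else Sgn.dot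

/-- `ε(t)`: the sign `+` if `t` is even and `−` if `t` is odd. -/
def eps (t : ℕ) : Sgn := if t % 2 = 0 then Sgn.pls else Sgn.mns

/-- `α` is a `p`-cochain: it vanishes on all cells that are not `p`-cells. -/
def IsCochainOfDeg {d : ℕ} (p : ℕ) (α : Cochain d) : Prop :=
  ∀ w : Cell d, (dots w).card ≠ p → α w = 0

/-- The indicator cochain of a cell: value `1` on that cell and `0` elsewhere. -/
def indicator {d : ℕ} (c : Cell d) : Cochain d := fun w => if w = c then 1 else 0

section Aux

open Finset

variable {d : ℕ}

lemma eps_ne_dot (t : ℕ) : eps t ≠ Sgn.dot := by unfold eps; split <;> simp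

lemma eps_congr {a b : ℕ} (h : a % 2 = b % 2) : eps a = eps b := by unfold eps; rw [h]

lemma hat_self (i : Fin d) (s : Sgn) : hatCell i s i = s := by simp [hatCell]

lemma hat_other {i k : Fin d} (s : Sgn) (h : k ≠ i) : hatCell i s k = Sgn.dot := by
  simp [hatCell, h]

/-- The cell with entry `a` at `i`, `b` at `j`, and `•` elsewhere. -/
def dbl (i j : Fin d) (a b : Sgn) : Cell d := fun k =>
  if k = i then a else if k = j then b else Sgn.dot

lemma pairCond_iff' {I : Finset (Fin d)} {k : Fin d} {a b : Sgn} (t : ℕ)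
    (h : (I.filter (fun i => i < k)).card % 2 = t % 2) :
    pairCond I k a b ↔ ((a = eps t ∧ b = Sgn.dot) ∨ (a = Sgn.dot ∧ b = eps (t + 1))) := by
  unfold pairCond eps
  rcases Nat.mod_two_eq_zero_or_one t with h' | h' <;>
    simp [h, h', Nat.add_mod t 1 2]

lemma dots_top : dots (topCell d) = univ := by
  ext k; simp [dots, topCell]

lemma dots_hat (i : Fin d) {s : Sgn} (hs : s ≠ Sgn.dot) : dots (hatCell i s) = {i}ᶜ := by
  ext k
  by_cases h : k = i <;> simp [dots, hatCell, h, hs]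

lemma dots_dbl {i j : Fin d} (hij : i ≠ j) {a b : Sgn} (ha : a ≠ Sgn.dot)
    (hb : b ≠ Sgn.dot) : dots (dbl i j a b) = ({i, j} : Finset (Fin d))ᶜ := by
  ext k
  simp only [dots, Finset.mem_filter, Finset.mem_univ, true_and, Finset.mem_compl,
    Finset.mem_insert, Finset.mem_singleton]
  simp only [dbl]
  by_cases h1 : k = i
  · rw [if_pos h1]; simp [h1, ha]
  · by_cases h2 : k = j
    · rw [if_neg h1, if_pos h2]; simp [h2, hb]
    · rw [if_neg h1, if_neg h2]; simp [h1, h2]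

lemma bothDot_eq_inter (z z' : Cell d) : bothDot z z' = dots z ∩ dots z' := by
  ext k
  simp only [bothDot, dots, Finset.mem_filter, Finset.mem_univ, true_and, Finset.mem_inter]

lemma card_pair_compl {i j : Fin d} (hij : i ≠ j) :
    (({i, j} : Finset (Fin d))ᶜ).card = d - 2 := by
  rw [Finset.card_compl, Finset.card_insert_of_notMem (by simp [hij]),
    Finset.card_singleton, Fintype.card_fin]

lemma filter_lt_left {i j : Fin d} (hij : i < j) :
    ((({i, j} : Finset (Fin d))ᶜ).filter (fun k => k < i)).card = i.val := by
  have : (({i, j} : Finset (Fin d))ᶜ).filter (fun k => k < i) = Finset.Iio i := by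
    ext k
    simp only [Finset.mem_filter, Finset.mem_compl, Finset.mem_insert,
      Finset.mem_singleton, Finset.mem_Iio]
    constructor
    · exact fun h => h.2
    · intro hk
      exact ⟨by push_neg; exact ⟨ne_of_lt hk, ne_of_lt (lt_trans hk hij)⟩, hk⟩
  rw [this, Fin.card_Iio]

lemma filter_lt_right {i j : Fin d} (hij : i < j) :
    ((({i, j} : Finset (Fin d))ᶜ).filter (fun k => k < j)).card = j.val - 1 := by
  have : (({i, j} : Finset (Fin d))ᶜ).filter (fun k => k < j) = (Finset.Iio j).erase i := by
    ext k
    simp only [Finset.mem_filter, Finset.mem_compl, Finset.mem_insert,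
      Finset.mem_singleton, Finset.mem_Iio, Finset.mem_erase]
    constructor
    · intro h
      push_neg at h
      exact ⟨h.1.1, h.2⟩
    · intro h
      exact ⟨by push_neg; exact ⟨h.1, ne_of_lt h.2⟩, h.2⟩
  rw [this, Finset.card_erase_of_mem (by simpa using hij), Fin.card_Iio]

/-- The four pairs contributing for a given `i < j`. -/
def P1 (i j : Fin d) : Cell d × Cell d := (hatCell i (eps i.val), hatCell j (eps j.val))

def P2 (i j : Fin d) : Cell d × Cell d :=
  (hatCell j (eps (j.val + 1)), hatCell i (eps (i.val + 1)))

def P3 (i j : Fin d) : Cell d × Cell d :=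
  (dbl i j (eps i.val) (eps (j.val + 1)), topCell d)

def P4 (i j : Fin d) : Cell d × Cell d :=
  (topCell d, dbl i j (eps (i.val + 1)) (eps j.val))

def pset (i j : Fin d) : Finset (Cell d × Cell d) :=
  if i < j then {P1 i j, P2 i j, P3 i j, P4 i j} else ∅

lemma bothDot_P1 {i j : Fin d} (hij : i ≠ j) :
    bothDot (P1 i j).1 (P1 i j).2 = ({i, j} : Finset (Fin d))ᶜ := by
  rw [P1, bothDot_eq_inter, dots_hat _ (eps_ne_dot _), dots_hat _ (eps_ne_dot _)]
  ext k
  simp only [Finset.mem_inter, Finset.mem_compl, Finset.mem_insert, Finset.mem_singleton]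
  tauto

lemma bothDot_P2 {i j : Fin d} (hij : i ≠ j) :
    bothDot (P2 i j).1 (P2 i j).2 = ({i, j} : Finset (Fin d))ᶜ := by
  rw [P2, bothDot_eq_inter, dots_hat _ (eps_ne_dot _), dots_hat _ (eps_ne_dot _)]
  ext k
  simp only [Finset.mem_inter, Finset.mem_compl, Finset.mem_insert, Finset.mem_singleton]
  tauto

lemma bothDot_P3 {i j : Fin d} (hij : i ≠ j) :
    bothDot (P3 i j).1 (P3 i j).2 = ({i, j} : Finset (Fin d))ᶜ := by
  rw [P3, bothDot_eq_inter, dots_dbl hij (eps_ne_dot _) (eps_ne_dot _), dots_top]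
  simp

lemma bothDot_P4 {i j : Fin d} (hij : i ≠ j) :
    bothDot (P4 i j).1 (P4 i j).2 = ({i, j} : Finset (Fin d))ᶜ := by
  rw [P4, bothDot_eq_inter, dots_dbl hij (eps_ne_dot _) (eps_ne_dot _), dots_top]
  simp

lemma intPair_top_iff (hd : 2 ≤ d) (z z' : Cell d) :
    IntPair (d - 2) (topCell d) z z' ↔
      ∃ i j : Fin d, i < j ∧
        ((z, z') = P1 i j ∨ (z, z') = P2 i j ∨ (z, z') = P3 i j ∨ (z, z') = P4 i j) := by
  constructor
  · rintro ⟨-, hcard, hpc⟩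
    -- the complement of the common-dot set has two elements i < j
    have hcc : ((bothDot z z')ᶜ).card = 2 := by
      rw [Finset.card_compl, hcard, Fintype.card_fin]; omega
    obtain ⟨i, j, hij0, hij⟩ := Finset.card_eq_two.mp hcc
    -- wlog i < j
    obtain ⟨i, j, hlt, hij⟩ : ∃ i j : Fin d, i < j ∧ (bothDot z z')ᶜ = {i, j} := by
      rcases lt_or_gt_of_ne hij0 with h | h
      · exact ⟨i, j, h, hij⟩
      · refine ⟨j, i, h, ?_⟩
        rw [hij]
        ext k
        simp only [Finset.mem_insert, Finset.mem_singleton]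
        tauto
    have hC : bothDot z z' = ({i, j} : Finset (Fin d))ᶜ := by
      rw [← hij, compl_compl]
    have hijne : i ≠ j := ne_of_lt hlt
    have hi : i ∉ bothDot z z' := by rw [hC]; simp
    have hj : j ∉ bothDot z z' := by rw [hC]; simp
    have hdotk : ∀ k : Fin d, k ≠ i → k ≠ j → z k = Sgn.dot ∧ z' k = Sgn.dot := by
      intro k h1 h2
      have : k ∈ bothDot z z' := by rw [hC]; simp [h1, h2]
      simpa [bothDot] using this
    have h1pos : 1 ≤ j.val := by
      have := hlt
      omega
    have hpci := hpc i rfl hi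
    have hpcj := hpc j rfl hj
    rw [hC] at hpci hpcj
    rw [pairCond_iff' i.val (by rw [filter_lt_left hlt])] at hpci
    rw [pairCond_iff' (j.val - 1) (by rw [filter_lt_right hlt])] at hpcj
    have hsub : j.val - 1 + 1 = j.val := by omega
    refine ⟨i, j, hlt, ?_⟩
    rcases hpci with ⟨hzi, hzi'⟩ | ⟨hzi, hzi'⟩ <;> rcases hpcj with ⟨hzj, hzj'⟩ | ⟨hzj, hzj'⟩
    · -- z nondot at i and j : P3
      refine Or.inr (Or.inr (Or.inl ?_))
      rw [P3]
      have e1 : eps (j.val - 1) = eps (j.val + 1) := eps_congr (by omega)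
      refine Prod.ext ?_ ?_ <;> funext k <;> simp only
      · unfold dbl
        by_cases h1 : k = i
        · subst h1; simp [hzi]
        · by_cases h2 : k = j
          · subst h2; simp [h1, hzj, e1]
          · simp [h1, h2, (hdotk k h1 h2).1]
      · unfold topCell
        by_cases h1 : k = i
        · subst h1; exact hzi'
        · by_cases h2 : k = j
          · subst h2; exact hzj'
          · exact (hdotk k h1 h2).2
    · -- P1
      refine Or.inl ?_
      rw [P1]
      rw [hsub] at hzj'
      refine Prod.ext ?_ ?_ <;> funext k <;> simp only [hatCell]
      · by_cases h1 : k = i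
        · subst h1; simp [hzi]
        · by_cases h2 : k = j
          · subst h2; simp [h1, hzj]
          · simp [h1, (hdotk k h1 h2).1]
      · by_cases h2 : k = j
        · subst h2; simp [hzj']
        · by_cases h1 : k = i
          · subst h1; simp [h2, hzi']
          · simp [h2, (hdotk k h1 h2).2]
    · -- P2
      refine Or.inr (Or.inl ?_)
      rw [P2]
      have e1 : eps (j.val - 1) = eps (j.val + 1) := eps_congr (by omega)
      refine Prod.ext ?_ ?_ <;> funext k <;> simp only [hatCell]
      · by_cases h2 : k = j
        · subst h2; simp [hzj, e1]
        · by_cases h1 : k = i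
          · subst h1; simp [h2, hzi]
          · simp [h2, (hdotk k h1 h2).1]
      · by_cases h1 : k = i
        · subst h1; simp [hzi']
        · by_cases h2 : k = j
          · subst h2; simp [h1, hzj']
          · simp [h1, (hdotk k h1 h2).2]
    · -- P4
      refine Or.inr (Or.inr (Or.inr ?_))
      rw [P4]
      rw [hsub] at hzj'
      refine Prod.ext ?_ ?_ <;> funext k <;> simp only
      · unfold topCell
        by_cases h1 : k = i
        · subst h1; exact hzi
        · by_cases h2 : k = j
          · subst h2; exact hzj
          · exact (hdotk k h1 h2).1
      · unfold dbl
        by_cases h1 : k = i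
        · subst h1; simp [hzi']
        · by_cases h2 : k = j
          · subst h2; simp [h1, hzj']
          · simp [h1, h2, (hdotk k h1 h2).2]
  · rintro ⟨i, j, hlt, hcase⟩
    have hijne : i ≠ j := ne_of_lt hlt
    have h1pos : 1 ≤ j.val := by
      have := hlt; omega
    have hBD : bothDot z z' = ({i, j} : Finset (Fin d))ᶜ := by
      rcases hcase with h | h | h | h
      · have hz : z = (P1 i j).1 := congrArg Prod.fst h
        have hz' : z' = (P1 i j).2 := congrArg Prod.snd h
        rw [hz, hz']; exact bothDot_P1 hijne
      · have hz : z = (P2 i j).1 := congrArg Prod.fst h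
        have hz' : z' = (P2 i j).2 := congrArg Prod.snd h
        rw [hz, hz']; exact bothDot_P2 hijne
      · have hz : z = (P3 i j).1 := congrArg Prod.fst h
        have hz' : z' = (P3 i j).2 := congrArg Prod.snd h
        rw [hz, hz']; exact bothDot_P3 hijne
      · have hz : z = (P4 i j).1 := congrArg Prod.fst h
        have hz' : z' = (P4 i j).2 := congrArg Prod.snd h
        rw [hz, hz']; exact bothDot_P4 hijne
    refine ⟨fun k hk => absurd rfl hk, ?_, ?_⟩
    · rw [hBD]; exact card_pair_compl hijne
    · intro k _ hk
      rw [hBD] at hk ⊢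
      have hk' : k = i ∨ k = j := by
        rw [Finset.mem_compl, not_not, Finset.mem_insert, Finset.mem_singleton] at hk
        exact hk
      have e1 : eps (j.val - 1) = eps (j.val + 1) := eps_congr (by omega)
      have hsub : j.val - 1 + 1 = j.val := by omega
      have hz1 : ∀ q : Cell d × Cell d, (z, z') = q → z = q.1 := fun q h => congrArg Prod.fst h
      have hz2 : ∀ q : Cell d × Cell d, (z, z') = q → z' = q.2 := fun q h => congrArg Prod.snd h
      rcases hk' with rfl | rfl
      · rw [pairCond_iff' k.val (by rw [filter_lt_left hlt])]
        rcases hcase with h | h | h | h <;> rw [hz1 _ h, hz2 _ h]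
        · exact Or.inl ⟨hat_self _ _, hat_other _ hijne⟩
        · exact Or.inr ⟨hat_other _ hijne, hat_self _ _⟩
        · exact Or.inl ⟨by simp [P3, dbl], rfl⟩
        · exact Or.inr ⟨rfl, by simp [P4, dbl]⟩
      · rw [pairCond_iff' (k.val - 1) (by rw [filter_lt_right hlt])]
        rcases hcase with h | h | h | h <;> rw [hz1 _ h, hz2 _ h]
        · exact Or.inr ⟨hat_other _ (Ne.symm hijne), by rw [hsub]; exact hat_self _ _⟩
        · exact Or.inl ⟨by rw [e1]; exact hat_self _ _, hat_other _ (Ne.symm hijne)⟩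
        · exact Or.inl ⟨by rw [e1]; simp [P3, dbl, hijne.symm], rfl⟩
        · exact Or.inr ⟨rfl, by rw [hsub]; simp [P4, dbl, hijne.symm]⟩

lemma mem_pset_support {i j : Fin d} (hlt : i < j) {p : Cell d × Cell d}
    (hp : p ∈ pset i j) :
    (∀ k : Fin d, k ≠ i → k ≠ j → p.1 k = Sgn.dot ∧ p.2 k = Sgn.dot) ∧
      (p.1 i ≠ Sgn.dot ∨ p.2 i ≠ Sgn.dot) ∧ (p.1 j ≠ Sgn.dot ∨ p.2 j ≠ Sgn.dot) := by
  have hijne : i ≠ j := ne_of_lt hlt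
  rw [pset, if_pos hlt] at hp
  simp only [Finset.mem_insert, Finset.mem_singleton] at hp
  rcases hp with rfl | rfl | rfl | rfl
  · exact ⟨fun k h1 h2 => ⟨hat_other _ h1, hat_other _ h2⟩,
      Or.inl (by simpa [P1, hatCell] using eps_ne_dot i.val),
      Or.inr (by simpa [P1, hatCell, hijne] using eps_ne_dot j.val)⟩
  · exact ⟨fun k h1 h2 => ⟨hat_other _ h2, hat_other _ h1⟩,
      Or.inr (by simpa [P2, hatCell] using eps_ne_dot (i.val + 1)),
      Or.inl (by simpa [P2, hatCell, hijne.symm] using eps_ne_dot (j.val + 1))⟩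
  · exact ⟨fun k h1 h2 => ⟨by simp [P3, dbl, h1, h2], rfl⟩,
      Or.inl (by simpa [P3, dbl] using eps_ne_dot i.val),
      Or.inl (by simpa [P3, dbl, hijne.symm] using eps_ne_dot (j.val + 1))⟩
  · exact ⟨fun k h1 h2 => ⟨rfl, by simp [P4, dbl, h1, h2]⟩,
      Or.inr (by simpa [P4, dbl] using eps_ne_dot (i.val + 1)),
      Or.inr (by simpa [P4, dbl, hijne.symm] using eps_ne_dot j.val)⟩

lemma mem_pset_iff {i j : Fin d} (p : Cell d × Cell d) :
    p ∈ pset i j ↔ i < j ∧ (p = P1 i j ∨ p = P2 i j ∨ p = P3 i j ∨ p = P4 i j) := by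
  unfold pset
  by_cases hlt : i < j
  · rw [if_pos hlt]
    simp only [Finset.mem_insert, Finset.mem_singleton, hlt, true_and]
  · rw [if_neg hlt]
    simp [hlt]

lemma pset_disjoint : ∀ x ∈ (Finset.univ : Finset (Fin d × Fin d)),
    ∀ y ∈ (Finset.univ : Finset (Fin d × Fin d)), x ≠ y →
      Disjoint (pset x.1 x.2) (pset y.1 y.2) := by
  rintro ⟨i, j⟩ - ⟨i', j'⟩ - hne
  by_cases h1 : i < j
  · by_cases h2 : i' < j'
    · rw [Finset.disjoint_left]
      intro p hp hp'
      obtain ⟨ha, hbi, hbj⟩ := mem_pset_support h1 hp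
      obtain ⟨ha', hbi', hbj'⟩ := mem_pset_support h2 hp'
      have mi' : i' = i ∨ i' = j := by
        by_contra hc
        push_neg at hc
        obtain ⟨e1, e2⟩ := ha i' hc.1 hc.2
        rcases hbi' with h | h <;> [exact h e1; exact h e2]
      have mj' : j' = i ∨ j' = j := by
        by_contra hc
        push_neg at hc
        obtain ⟨e1, e2⟩ := ha j' hc.1 hc.2
        rcases hbj' with h | h <;> [exact h e1; exact h e2]
      have mi : i = i' ∨ i = j' := by
        by_contra hc
        push_neg at hc
        obtain ⟨e1, e2⟩ := ha' i hc.1 hc.2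
        rcases hbi with h | h <;> [exact h e1; exact h e2]
      apply hne
      have hv1 : i.val < j.val := h1
      have hv2 : i'.val < j'.val := h2
      have e1 : i'.val = i.val ∨ i'.val = j.val := by
        rcases mi' with h | h
        · exact Or.inl (congrArg Fin.val h)
        · exact Or.inr (congrArg Fin.val h)
      have e2 : j'.val = i.val ∨ j'.val = j.val := by
        rcases mj' with h | h
        · exact Or.inl (congrArg Fin.val h)
        · exact Or.inr (congrArg Fin.val h)
      have e3 : i.val = i'.val ∨ i.val = j'.val := by
        rcases mi with h | h
        · exact Or.inl (congrArg Fin.val h)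
        · exact Or.inr (congrArg Fin.val h)
      have : i.val = i'.val ∧ j.val = j'.val := by omega
      exact Prod.ext (Fin.ext this.1) (Fin.ext this.2)
    · simp [pset, h2]
  · simp [pset, h1]

end Aux

/-- For `d ≥ 2` and `ℤ₂`-`(d−1)`-cochains `α`, `β` on the `d`-dimensional
hypercube (indices written `1`-based, so the `1`-based index of `i : Fin d` is `i.val + 1`):
`(α ∪_{d−2} β)(•,…,•) = Σ_{1 ≤ i < j ≤ d} [α(î_{ε(i+1)}) β(ĵ_{ε(j+1)}) + β(î_{ε(i)}) α(ĵ_{ε(j)})]`,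
where `ε(t)` is `+` if `t` is even and `−` if `t` is odd. -/
theorem cup_d_sub_two_formula (d : ℕ) (hd : 2 ≤ d) (α β : Cochain d)
    (hα : IsCochainOfDeg (d - 1) α) (hβ : IsCochainOfDeg (d - 1) β) :
    cup (d - 2) α β (topCell d) =
      ∑ i : Fin d, ∑ j : Fin d,
        if i < j then
          α (hatCell i (eps ((i.val + 1) + 1))) * β (hatCell j (eps ((j.val + 1) + 1)))
            + β (hatCell i (eps (i.val + 1))) * α (hatCell j (eps (j.val + 1)))
        else 0 := by
  classical
  have hset : intPairs (d - 2) (topCell d) =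
      Finset.univ.biUnion (fun x : Fin d × Fin d => pset x.1 x.2) := by
    ext p
    rw [Finset.mem_biUnion]
    simp only [intPairs, Finset.mem_filter, Finset.mem_univ, true_and]
    rw [intPair_top_iff hd p.1 p.2]
    constructor
    · rintro ⟨i, j, hlt, hc⟩
      rw [Prod.mk.eta] at hc
      exact ⟨(i, j), (mem_pset_iff p).mpr ⟨hlt, hc⟩⟩
    · rintro ⟨⟨i, j⟩, hp⟩
      obtain ⟨hlt, hc⟩ := (mem_pset_iff p).mp hp
      exact ⟨i, j, hlt, by rw [Prod.mk.eta]; exact hc⟩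
  simp only [cup]
  rw [hset, Finset.sum_biUnion (fun x hx y hy hxy => pset_disjoint x hx y hy hxy)]
  rw [Fintype.sum_prod_type]
  refine Finset.sum_congr rfl fun i _ => Finset.sum_congr rfl fun j _ => ?_
  by_cases hlt : i < j
  · have hijne : i ≠ j := ne_of_lt hlt
    rw [pset, if_pos hlt, if_pos hlt]
    have n12 : P1 i j ≠ P2 i j := by
      intro h
      have h1 := congrArg (fun p : Cell d × Cell d => p.1 i) h
      simp only [P1, P2] at h1
      rw [hat_self, hat_other _ hijne] at h1
      exact eps_ne_dot _ h1
    have n13 : P1 i j ≠ P3 i j := by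
      intro h
      have h1 := congrArg (fun p : Cell d × Cell d => p.2 j) h
      simp only [P1, P3, topCell] at h1
      rw [hat_self] at h1
      exact eps_ne_dot _ h1
    have n14 : P1 i j ≠ P4 i j := by
      intro h
      have h1 := congrArg (fun p : Cell d × Cell d => p.1 i) h
      simp only [P1, P4, topCell] at h1
      rw [hat_self] at h1
      exact eps_ne_dot _ h1
    have n23 : P2 i j ≠ P3 i j := by
      intro h
      have h1 := congrArg (fun p : Cell d × Cell d => p.2 i) h
      simp only [P2, P3, topCell] at h1
      rw [hat_self] at h1
      exact eps_ne_dot _ h1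
    have n24 : P2 i j ≠ P4 i j := by
      intro h
      have h1 := congrArg (fun p : Cell d × Cell d => p.1 j) h
      simp only [P2, P4, topCell] at h1
      rw [hat_self] at h1
      exact eps_ne_dot _ h1
    have n34 : P3 i j ≠ P4 i j := by
      intro h
      have h1 := congrArg (fun p : Cell d × Cell d => p.1 i) h
      simp [P3, P4, topCell, dbl] at h1
      exact eps_ne_dot _ h1
    rw [Finset.sum_insert (by simp [n12, n13, n14]),
      Finset.sum_insert (by simp [n23, n24]),
      Finset.sum_insert (by simp [n34]), Finset.sum_singleton]
    have hz3 : α (P3 i j).1 = 0 := by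
      apply hα
      show (dots (dbl i j (eps i.val) (eps (j.val + 1)))).card ≠ d - 1
      rw [dots_dbl hijne (eps_ne_dot _) (eps_ne_dot _), card_pair_compl hijne]
      omega
    have hz4 : α (P4 i j).1 = 0 := by
      apply hα
      show (dots (topCell d)).card ≠ d - 1
      rw [dots_top, Finset.card_univ, Fintype.card_fin]
      omega
    rw [hz3, hz4, zero_mul, zero_mul, add_zero, add_zero]
    have ei : eps (i.val + 1 + 1) = eps i.val := eps_congr (by omega)
    have ej : eps (j.val + 1 + 1) = eps j.val := eps_congr (by omega)
    rw [ei, ej]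
    simp only [P1, P2]
    ring
  · rw [pset, if_neg hlt, if_neg hlt, Finset.sum_empty]
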